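/- arXiv:1604.04549 — 3 statements merged into one kernel-verified Lean document; each statement's English description precedes it below -/
import Mathlib

section
/- Let Π(k) ⊆ ℝ² consist of the four corner points π₁ = (0,5), π₂ = (0,0), π₃ = (1,0), π₄ = (1,5) together with the k+1 points (1/2, 5j/k) for 0 ≤ j ≤ k. Then the shortest Hamiltonian path on Π(k) with endpoints π₂ and π₃ has length at least 5 + 5 + 1/2 + 1/2 = 11, while the path π₂, π₁, (1/2, 5), (1/2, 5(k−1)/k), …, (1/2, 0), π₃ — going up the left side, then down the middle column — has length 5 + dist(π₁, (1/2,5)) + 5 + dist((1/2,0), π₃) = 11. -/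
open Metric

noncomputable local instance {n : ℕ} : DecidableEq (EuclideanSpace ℝ (Fin n)) :=
  Classical.decEq _

noncomputable def pt (a b : ℝ) : EuclideanSpace ℝ (Fin 2) :=
  (WithLp.equiv 2 (Fin 2 → ℝ)).symm ![a, b]

noncomputable def plen {α : Type*} [PseudoMetricSpace α] : List α → ℝ
  | [] => 0
  | [_] => 0
  | a :: b :: l => dist a b + plen (b :: l)

/-- The ladder gadget Π(k): four corners and the middle column. -/
noncomputable def PiSet (k : ℕ) : Finset (EuclideanSpace ℝ (Fin 2)) :=
  {pt 0 5, pt 0 0, pt 1 0, pt 1 5} ∪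
    (Finset.range (k + 1)).image (fun j : ℕ => pt (1/2) (5 * (j : ℝ) / k))

section lems
variable {α : Type*} [PseudoMetricSpace α]

lemma plen_append : ∀ (l₁ : List α) (x : α) (l₂ : List α),
    plen (l₁ ++ x :: l₂) = plen (l₁ ++ [x]) + plen (x :: l₂)
  | [], x, l₂ => by simp [plen]
  | [a], x, l₂ => by simp [plen]
  | a :: b :: l₁, x, l₂ => by
      have ih := plen_append (b :: l₁) x l₂
      have hL : plen ((a :: b :: l₁) ++ x :: l₂) = dist a b + plen ((b :: l₁) ++ x :: l₂) := rfl
      have hR : plen ((a :: b :: l₁) ++ [x]) = dist a b + plen ((b :: l₁) ++ [x]) := rfl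
      rw [hL, hR, ih]; ring

lemma plen_ge_dist : ∀ (m : List α) (a b : α), dist a b ≤ plen (a :: (m ++ [b]))
  | [], a, b => by simp [plen]
  | c :: m, a, b => by
      have h := plen_ge_dist m c b
      have h2 := dist_triangle a c b
      have e : plen (a :: ((c :: m) ++ [b])) = dist a c + plen (c :: (m ++ [b])) := rfl
      rw [e]; linarith

lemma key (a b c d : α) (s u v : List α) :
    dist a b + dist b c + dist c d ≤ plen (a :: (s ++ b :: (u ++ c :: (v ++ [d])))) := by
  have h0 : plen (a :: (s ++ b :: (u ++ c :: (v ++ [d]))))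
      = plen (a :: (s ++ [b])) + plen (b :: (u ++ c :: (v ++ [d]))) :=
    plen_append (a :: s) b _
  have h1 : plen (b :: (u ++ c :: (v ++ [d])))
      = plen (b :: (u ++ [c])) + plen (c :: (v ++ [d])) :=
    plen_append (b :: u) c _
  have g1 := plen_ge_dist s a b
  have g2 := plen_ge_dist u b c
  have g3 := plen_ge_dist v c d
  linarith

lemma plen_range (g : ℕ → α) :
    ∀ (n : ℕ) (c : α), plen ((List.range (n+1)).map g ++ [c])
      = (∑ i ∈ Finset.range n, dist (g i) (g (i+1))) + dist (g n) c
  | 0, c => by simp [plen]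
  | n+1, c => by
      have e : (List.range (n+1+1)).map g ++ [c]
          = (List.range (n+1)).map g ++ (g (n+1)) :: [c] := by
        rw [List.range_succ (n := n+1)]; simp
      rw [e, plen_append, plen_range g n (g (n+1)), Finset.sum_range_succ]
      simp [plen]

end lems

lemma dist_pt (a b c d : ℝ) :
    dist (pt a b) (pt c d) = Real.sqrt ((a-c)^2 + (b-d)^2) := by
  rw [EuclideanSpace.dist_eq]
  simp [pt, Fin.sum_univ_two, Real.dist_eq, sq_abs]

lemma sqrt26 : (5:ℝ) ≤ Real.sqrt 26 := by
  rw [show (5:ℝ) = Real.sqrt 25 by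
    rw [show (25:ℝ) = 5^2 by norm_num, Real.sqrt_sq]; norm_num]
  exact Real.sqrt_le_sqrt (by norm_num)

lemma d21 : dist (pt 0 0) (pt 0 5) = 5 := by
  rw [dist_pt, show ((0:ℝ)-0)^2 + ((0:ℝ)-5)^2 = 5^2 by norm_num, Real.sqrt_sq]; norm_num

lemma d14 : dist (pt 0 5) (pt 1 5) = 1 := by
  rw [dist_pt, show ((0:ℝ)-1)^2 + ((5:ℝ)-5)^2 = 1^2 by norm_num, Real.sqrt_sq]; norm_num

lemma d43 : dist (pt 1 5) (pt 1 0) = 5 := by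
  rw [dist_pt, show ((1:ℝ)-1)^2 + ((5:ℝ)-0)^2 = 5^2 by norm_num, Real.sqrt_sq]; norm_num

lemma d24 : (5:ℝ) ≤ dist (pt 0 0) (pt 1 5) := by
  rw [dist_pt, show ((0:ℝ)-1)^2 + ((0:ℝ)-5)^2 = 26 by norm_num]; exact sqrt26

lemma d13 : (5:ℝ) ≤ dist (pt 0 5) (pt 1 0) := by
  rw [dist_pt, show ((0:ℝ)-1)^2 + ((5:ℝ)-0)^2 = 26 by norm_num]; exact sqrt26

lemma ne21 : pt 0 0 ≠ pt 0 5 := by intro h; have := d21; simp [h] at this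
lemma ne41 : pt 1 5 ≠ pt 0 5 := by
  intro h; have := d14; rw [← h] at this; simp at this
lemma ne43 : pt 1 5 ≠ pt 1 0 := by intro h; have := d43; simp [h] at this
lemma ne24 : pt 0 0 ≠ pt 1 5 := by
  intro h; have := d24; rw [← h, dist_self] at this; norm_num at this
lemma ne13 : pt 0 5 ≠ pt 1 0 := by
  intro h; have := d13; rw [← h, dist_self] at this; norm_num at this

/-- the shortest Hamiltonian path on Π(k) with endpoints π₂, π₃ has
length at least 11, and the explicit path down the left side and through the middle
column has length exactly 11. -/
theorem stmt5 (k : ℕ) (hk : 1 ≤ k) :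
    (∀ l : List (EuclideanSpace ℝ (Fin 2)),
        l.Nodup → l.toFinset = PiSet k →
        l.head?.getD (pt 0 0) = pt 0 0 → l.getLast?.getD (pt 0 0) = pt 1 0 →
        plen l ≥ 11) ∧
    plen ((pt 0 0) :: (pt 0 5) ::
        ((List.range (k + 1)).map (fun j => pt (1/2) (5 * ((k : ℝ) - j) / k))
          ++ [pt 1 0])) = 11 := by
  have hk0 : (k:ℝ) ≠ 0 := by positivity
  constructor
  · intro l hnd hfin hhead hlast
    have hm1 : pt 0 5 ∈ l := by rw [← List.mem_toFinset, hfin]; simp [PiSet]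
    have hm4 : pt 1 5 ∈ l := by rw [← List.mem_toFinset, hfin]; simp [PiSet]
    obtain ⟨s, t, rfl⟩ := List.append_of_mem hm1
    rcases List.mem_append.mp hm4 with h4 | h4
    · -- pt 1 5 occurs before pt 0 5
      obtain ⟨u, w, rfl⟩ := List.append_of_mem h4
      -- l = (u ++ pt 1 5 :: w) ++ pt 0 5 :: t
      rcases u with _ | ⟨a, u'⟩
      · exfalso
        simp only [List.nil_append, List.head?_cons, Option.getD_some] at hhead
        exact ne24 hhead.symm
      · have ha : a = pt 0 0 := by
          simpa using hhead
        subst ha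
        rcases List.eq_nil_or_concat t with rfl | ⟨L, b, rfl⟩
        · exfalso
          have e : ((pt 0 0 :: u' ++ pt 1 5 :: w) ++ pt 0 5 :: ([] : List _))
              = ((pt 0 0 :: u' ++ pt 1 5 :: w)) ++ [pt 0 5] := rfl
          rw [e, List.getLast?_concat] at hlast
          simp at hlast
          exact ne13 hlast
        · have e : ((pt 0 0 :: u' ++ pt 1 5 :: w) ++ pt 0 5 :: L.concat b)
              = ((pt 0 0 :: u' ++ pt 1 5 :: w) ++ pt 0 5 :: L) ++ [b] := by
            simp
          rw [e, List.getLast?_concat] at hlast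
          simp at hlast
          subst hlast
          have hkey := key (pt 0 0) (pt 1 5) (pt 0 5) (pt 1 0) u' w L
          have e2 : ((pt 0 0 :: u' ++ pt 1 5 :: w) ++ pt 0 5 :: L.concat (pt 1 0))
              = pt 0 0 :: (u' ++ pt 1 5 :: (w ++ pt 0 5 :: (L ++ [pt 1 0]))) := by
            simp
          rw [ge_iff_le, e2]
          have h41 : dist (pt 1 5) (pt 0 5) = 1 := by rw [dist_comm]; exact d14
          have := d24; have := d13
          rw [h41] at hkey
          linarith
    · -- pt 1 5 occurs after pt 0 5
      have h4' : pt 1 5 ∈ t := by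
        rcases List.mem_cons.mp h4 with h | h
        · exact absurd h ne41
        · exact h
      obtain ⟨u, v, rfl⟩ := List.append_of_mem h4'
      rcases s with _ | ⟨a, s'⟩
      · exfalso
        simp only [List.nil_append, List.head?_cons, Option.getD_some] at hhead
        exact ne21 hhead.symm
      · have ha : a = pt 0 0 := by
          simpa using hhead
        subst ha
        rcases List.eq_nil_or_concat v with rfl | ⟨L, b, rfl⟩
        · exfalso
          have e : ((pt 0 0 :: s') ++ pt 0 5 :: (u ++ pt 1 5 :: ([] : List _)))
              = ((pt 0 0 :: s') ++ pt 0 5 :: u) ++ [pt 1 5] := by simp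
          rw [e, List.getLast?_concat] at hlast
          simp at hlast
          exact ne43 hlast
        · have e : ((pt 0 0 :: s') ++ pt 0 5 :: (u ++ pt 1 5 :: L.concat b))
              = (((pt 0 0 :: s') ++ pt 0 5 :: u) ++ pt 1 5 :: L) ++ [b] := by
            simp
          rw [e, List.getLast?_concat] at hlast
          simp at hlast
          subst hlast
          have hkey := key (pt 0 0) (pt 0 5) (pt 1 5) (pt 1 0) s' u L
          have e2 : ((pt 0 0 :: s') ++ pt 0 5 :: (u ++ pt 1 5 :: L.concat (pt 1 0)))
              = pt 0 0 :: (s' ++ pt 0 5 :: (u ++ pt 1 5 :: (L ++ [pt 1 0]))) := by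
            simp
          rw [ge_iff_le, e2]
          rw [d21, d14, d43] at hkey
          linarith
  · -- the explicit path
    have hnorm : ((List.range (k + 1)).map (fun j => pt (1/2) (5 * ((k : ℝ) - j) / k)))
        = (List.range (k+1)).map (fun j : ℕ => pt (1/2) (5 * ((k : ℝ) - (j:ℕ)) / k)) := by
      simp only [bind_pure_comp, List.map_eq_map, List.map_map]; rfl
    rw [hnorm]
    set g : ℕ → EuclideanSpace ℝ (Fin 2) :=
      fun j : ℕ => pt (1/2) (5 * ((k : ℝ) - (j:ℕ)) / k) with hg
    have hM : (List.range (k+1)).map g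
        = g 0 :: (List.range k).map (fun i => g (i+1)) := by
      rw [List.range_succ_eq_map, List.map_cons, List.map_map]
      rfl
    rw [hM]
    have e1 : plen (pt 0 0 :: pt 0 5 ::
          ((g 0 :: (List.range k).map (fun i => g (i+1))) ++ [pt 1 0]))
        = dist (pt 0 0) (pt 0 5) + (dist (pt 0 5) (g 0)
            + plen (g 0 :: ((List.range k).map (fun i => g (i+1)) ++ [pt 1 0]))) := rfl
    rw [e1, ← List.cons_append, ← hM, plen_range g k (pt 1 0)]
    have hsum : ∑ i ∈ Finset.range k, dist (g i) (g (i+1)) = 5 := by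
      have hterm : ∀ i ∈ Finset.range k, dist (g i) (g (i+1)) = 5 / k := by
        intro i _
        rw [hg]
        simp only
        rw [dist_pt]
        have h2 : 5 * ((k:ℝ) - (i:ℕ)) / k - 5 * ((k:ℝ) - ((i+1:ℕ):ℝ)) / k = 5 / k := by
          push_cast
          field_simp
          ring
        rw [h2, show ((1:ℝ)/2 - 1/2)^2 + (5/(k:ℝ))^2 = (5/k)^2 by ring,
          Real.sqrt_sq (by positivity)]
      rw [Finset.sum_congr rfl hterm, Finset.sum_const, Finset.card_range,
        nsmul_eq_mul]
      field_simp
    have hgk : dist (g k) (pt 1 0) = 1/2 := by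
      rw [hg]; simp only
      rw [dist_pt, show ((1:ℝ)/2 - 1)^2 + (5 * ((k:ℝ) - (k:ℕ)) / k - 0)^2 = (1/2)^2 by
        ring, Real.sqrt_sq (by norm_num)]
    have hg0 : dist (pt 0 5) (g 0) = 1/2 := by
      rw [hg]; simp only
      have h5 : 5 * ((k:ℝ) - ((0:ℕ):ℝ)) / k = 5 := by
        push_cast; field_simp; ring
      rw [h5, dist_pt, show ((0:ℝ) - 1/2)^2 + ((5:ℝ) - 5)^2 = (1/2)^2 by ring,
        Real.sqrt_sq (by norm_num)]
    rw [hsum, hgk, hg0, d21]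
    norm_num
end

section
/- Let p ∈ ℝ² and ε > 0, and let p_ε be uniformly distributed on the closed ball B(p, ε). Let q ∈ ℝ² with dist(p, q) ≥ 2ε. Then for any two points x, y ∈ ℝ² with |dist(q, x) − dist(q, y)| ≤ ε/100 and dist(x,y) ≥ ε, if x_ε, y_ε are independent uniform perturbations in balls of radius ε about x and y respectively, then P(dist(q, x_ε) < dist(q, y_ε)) ≥ 1/4. -/
open Metric MeasureTheory
open scoped RealInnerProductSpace ENNReal

/-- The uniform probability measure on the closed ball of radius ε about x. -/
noncomputable def unifBall (x : EuclideanSpace ℝ (Fin 2)) (ε : ℝ) :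
    Measure (EuclideanSpace ℝ (Fin 2)) :=
  (volume (closedBall x ε))⁻¹ • volume.restrict (closedBall x ε)

namespace Stmt11Aux

local notation "E2" => EuclideanSpace ℝ (Fin 2)

noncomputable def W : ℝ≥0∞ := volume (ball (0 : E2) 1)

lemma volCB (x : E2) {r : ℝ} (hr : 0 ≤ r) :
    volume (closedBall x r) = ENNReal.ofReal (r ^ 2) * W := by
  have := Measure.addHaar_closedBall (volume : Measure E2) x hr
  rwa [finrank_euclideanSpace_fin] at this

lemma unifBall_apply (x : E2) (ε : ℝ) (A : Set E2) :
    unifBall x ε A = (volume (closedBall x ε))⁻¹ * volume (A ∩ closedBall x ε) := by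
  rw [unifBall, Measure.smul_apply, Measure.restrict_apply' measurableSet_closedBall,
    smul_eq_mul]

lemma CB_ne_zero (x : E2) {ε : ℝ} (hε : 0 < ε) : volume (closedBall x ε) ≠ 0 :=
  (measure_closedBall_pos _ _ hε).ne'

lemma W_ne_top : W ≠ ⊤ := by
  have : W < ⊤ := measure_ball_lt_top
  exact this.ne

lemma CB_ne_top (x : E2) (ε : ℝ) : volume (closedBall x ε) ≠ ⊤ :=
  measure_closedBall_lt_top.ne

lemma unifBall_univ (x : E2) {ε : ℝ} (hε : 0 < ε) : unifBall x ε Set.univ = 1 := by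
  rw [unifBall_apply, Set.univ_inter,
    ENNReal.inv_mul_cancel (CB_ne_zero x hε) (CB_ne_top x ε)]

lemma cont_coord (i : Fin 2) : Continuous fun u : E2 => u i :=
  (EuclideanSpace.proj (𝕜 := ℝ) i).continuous

lemma abs_coord_le_norm (u : E2) (i : Fin 2) : |u i| ≤ ‖u‖ := by
  rw [EuclideanSpace.norm_eq, ← Real.sqrt_sq_eq_abs]
  apply Real.sqrt_le_sqrt
  have := Finset.single_le_sum (f := fun j => ‖u j‖ ^ 2)
    (fun j _ => by positivity) (Finset.mem_univ i)
  simpa [Real.norm_eq_abs, sq_abs] using this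

lemma vol_box (s t : Set ℝ) (hs : MeasurableSet s) (ht : MeasurableSet t) :
    volume {u : E2 | u 0 ∈ s ∧ u 1 ∈ t} = volume s * volume t := by
  have hφ := EuclideanSpace.volume_preserving_symm_measurableEquiv_toLp (Fin 2)
  have hmeas : ∀ i : Fin 2, MeasurableSet (![s, t] i) := by
    intro i; fin_cases i <;> simpa
  have hset : {u : E2 | u 0 ∈ s ∧ u 1 ∈ t}
      = (MeasurableEquiv.toLp 2 (Fin 2 → ℝ)).symm ⁻¹' (Set.univ.pi ![s, t]) := by
    ext u
    simp [Set.mem_univ_pi, Fin.forall_fin_two]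
  rw [hset, hφ.measure_preimage (MeasurableSet.univ_pi hmeas).nullMeasurableSet,
    volume_pi_pi]
  simp [Fin.prod_univ_two]

lemma W_ge : ENNReal.ofReal (49 / 25) ≤ W := by
  have hsub : {u : E2 | u 0 ∈ Set.Ioo (-(7/10) : ℝ) (7/10)
      ∧ u 1 ∈ Set.Ioo (-(7/10) : ℝ) (7/10)} ⊆ ball (0 : E2) 1 := by
    rintro u ⟨h0, h1⟩
    rw [mem_ball, dist_zero_right]
    have hsq : ‖u‖ ^ 2 = u 0 ^ 2 + u 1 ^ 2 := by
      rw [EuclideanSpace.norm_eq, Real.sq_sqrt (by positivity)]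
      simp [Fin.sum_univ_two, Real.norm_eq_abs, sq_abs]
    nlinarith [h0.1, h0.2, h1.1, h1.2, norm_nonneg u]
  calc ENNReal.ofReal (49 / 25)
      = volume (Set.Ioo (-(7/10) : ℝ) (7/10)) * volume (Set.Ioo (-(7/10) : ℝ) (7/10)) := by
        rw [Real.volume_Ioo, ← ENNReal.ofReal_mul (by norm_num)]
        norm_num
    _ = volume {u : E2 | u 0 ∈ Set.Ioo (-(7/10) : ℝ) (7/10)
        ∧ u 1 ∈ Set.Ioo (-(7/10) : ℝ) (7/10)} :=
        (vol_box _ _ measurableSet_Ioo measurableSet_Ioo).symm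
    _ ≤ W := measure_mono hsub

lemma vol_slab (y e : E2) (he : ‖e‖ = 1) (ε α L : ℝ) :
    volume {w : E2 | ⟪w - y, e⟫ ∈ Set.Icc α (α + L) ∧ dist w y ≤ ε}
      ≤ ENNReal.ofReal L * ENNReal.ofReal (2 * ε) := by
  set e0 : E2 := EuclideanSpace.single 0 1 with he0_def
  have he0 : ‖e0‖ = 1 := by simp [he0_def]
  set ρ := Submodule.reflection (ℝ ∙ (e - e0))ᗮ with hρ_def
  have hρe : ρ e = e0 := Submodule.reflection_sub (by rw [he, he0])
  set Φ : E2 → E2 := fun w => ρ w - ρ y with hΦ_def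
  have hmp : MeasurePreserving Φ volume volume := by
    have h1 : MeasurePreserving (fun v : E2 => v + -(ρ y)) volume volume :=
      measurePreserving_add_right volume _
    have h2 : MeasurePreserving (⇑ρ) volume volume := ρ.measurePreserving
    have := h1.comp h2
    simpa [hΦ_def, sub_eq_add_neg, Function.comp_def] using this
  set Box : Set E2 := {u : E2 | u 0 ∈ Set.Icc α (α + L) ∧ u 1 ∈ Set.Icc (-ε) ε}
    with hBox_def
  have hBoxMeas : MeasurableSet Box := by
    apply MeasurableSet.inter
    · exact (cont_coord 0).measurable measurableSet_Icc
    · exact (cont_coord 1).measurable measurableSet_Icc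
  have hsub : {w : E2 | ⟪w - y, e⟫ ∈ Set.Icc α (α + L) ∧ dist w y ≤ ε}
      ⊆ Φ ⁻¹' Box := by
    rintro w ⟨hc, hd⟩
    have hΦw : Φ w = ρ (w - y) := by rw [hΦ_def]; simp [map_sub]
    have h0 : (Φ w) 0 = ⟪w - y, e⟫ := by
      have h := ρ.inner_map_map (w - y) e
      rw [hρe] at h
      rw [hΦw, ← h, he0_def, EuclideanSpace.inner_single_right]
      simp
    have h1 : |(Φ w) 1| ≤ ε := by
      calc |(Φ w) 1| ≤ ‖Φ w‖ := abs_coord_le_norm _ _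
        _ = ‖w - y‖ := by rw [hΦw, ρ.norm_map]
        _ ≤ ε := by rwa [dist_eq_norm] at hd
    exact ⟨by rw [h0]; exact hc, abs_le.mp h1⟩
  have hL : α + L - α = L := by ring
  have h2ε : ε - -ε = 2 * ε := by ring
  calc volume {w : E2 | ⟪w - y, e⟫ ∈ Set.Icc α (α + L) ∧ dist w y ≤ ε}
      ≤ volume (Φ ⁻¹' Box) := measure_mono hsub
    _ = volume Box := hmp.measure_preimage hBoxMeas.nullMeasurableSet
    _ = volume (Set.Icc α (α + L)) * volume (Set.Icc (-ε) ε) :=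
        vol_box _ _ measurableSet_Icc measurableSet_Icc
    _ = ENNReal.ofReal L * ENNReal.ofReal (2 * ε) := by
        rw [Real.volume_Icc, Real.volume_Icc, hL, h2ε]

lemma shift (q x y : E2) {ε δ : ℝ} (hε : 0 < ε)
    (hr : 0 < dist q x) (htie : |dist q x - dist q y| ≤ δ) (t : ℝ) :
    unifBall y ε (closedBall q (t - δ)) ≤ unifBall x ε (closedBall q t) := by
  set r := dist q x with hr_def
  set s := dist q y with hs_def
  set u : E2 := r⁻¹ • (x - q) with hu_def
  have hxq : ‖x - q‖ = r := by rw [← dist_eq_norm, dist_comm]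
  have hnu : ‖u‖ = 1 := by
    rw [hu_def, norm_smul, hxq, norm_inv, Real.norm_eq_abs, abs_of_pos hr]
    field_simp
  have ha : ‖y - q‖ = s := by rw [← dist_eq_norm, dist_comm]
  have hb : ‖s • u‖ = s := by
    rw [norm_smul, hnu, mul_one, Real.norm_eq_abs, abs_of_nonneg dist_nonneg]
  set ρ := Submodule.reflection (ℝ ∙ ((y - q) - s • u))ᗮ with hρ_def
  have hρa : ρ (y - q) = s • u := Submodule.reflection_sub (by rw [ha, hb])
  set Φ : E2 → E2 := fun w => ρ w + (x - ρ y) with hΦ_def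
  have hmp : MeasurePreserving Φ volume volume := by
    have h1 : MeasurePreserving (fun v : E2 => v + (x - ρ y)) volume volume :=
      measurePreserving_add_right volume _
    exact h1.comp ρ.measurePreserving
  have hxqu : x - q = r • u := by
    rw [hu_def, smul_smul]
    rw [mul_inv_cancel₀ hr.ne', one_smul]
  have key1 : ∀ w, dist (Φ w) x = dist w y := by
    intro w
    have hh : Φ w - x = ρ (w - y) := by
      rw [hΦ_def]; simp only [map_sub]; abel
    rw [dist_eq_norm, hh, ρ.norm_map, ← dist_eq_norm]
  have key2 : ∀ w, dist (Φ w) q ≤ dist w q + δ := by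
    intro w
    have h5 : x - q - ρ (y - q) = (r - s) • u := by
      rw [hxqu, hρa, ← sub_smul]
    have hd : Φ w - q = ρ (w - q) + (r - s) • u := by
      rw [← h5, hΦ_def]; simp only [map_sub]; abel
    rw [dist_eq_norm, hd]
    have habs : |r - s| ≤ δ := htie
    calc ‖ρ (w - q) + (r - s) • u‖ ≤ ‖ρ (w - q)‖ + ‖(r - s) • u‖ := norm_add_le _ _
      _ = dist w q + |r - s| := by
          rw [ρ.norm_map, ← dist_eq_norm, norm_smul, hnu, mul_one, Real.norm_eq_abs]
      _ ≤ dist w q + δ := by linarith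
  have hVy : volume (closedBall y ε) = volume (closedBall x ε) := by
    rw [volCB y hε.le, volCB x hε.le]
  rw [unifBall_apply, unifBall_apply, hVy]
  apply mul_le_mul_right
  have hsub : closedBall q (t - δ) ∩ closedBall y ε
      ⊆ Φ ⁻¹' (closedBall q t ∩ closedBall x ε) := by
    rintro w ⟨h1, h2⟩
    rw [mem_closedBall] at h1 h2
    constructor
    · rw [mem_closedBall]
      calc dist (Φ w) q ≤ dist w q + δ := key2 w
        _ ≤ (t - δ) + δ := by linarith
        _ = t := by ring
    · rw [mem_closedBall, key1 w]; exact h2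
  calc volume (closedBall q (t - δ) ∩ closedBall y ε)
      ≤ volume (Φ ⁻¹' (closedBall q t ∩ closedBall x ε)) := measure_mono hsub
    _ = volume (closedBall q t ∩ closedBall x ε) :=
        hmp.measure_preimage
          ((measurableSet_closedBall.inter measurableSet_closedBall).nullMeasurableSet)

lemma quarter_of (y : E2) {ε : ℝ} (hε : 0 < ε) (A : Set E2)
    (h : 4 * volume (A ∩ closedBall y ε) ≤ volume (closedBall y ε)) :
    unifBall y ε A ≤ 1 / 4 := by
  rw [unifBall_apply]
  have hV0 := CB_ne_zero y hε
  have hVt := CB_ne_top y ε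
  have hm : volume (A ∩ closedBall y ε) ≤ volume (closedBall y ε) / 4 := by
    rw [ENNReal.le_div_iff_mul_le (by norm_num) (by norm_num)]
    rw [mul_comm]; exact h
  calc (volume (closedBall y ε))⁻¹ * volume (A ∩ closedBall y ε)
      ≤ (volume (closedBall y ε))⁻¹ * (volume (closedBall y ε) / 4) :=
        mul_le_mul_right hm _
    _ = 1 / 4 := by
        rw [ENNReal.div_eq_inv_mul, ← mul_assoc, mul_comm (volume (closedBall y ε))⁻¹,
          mul_assoc, ENNReal.inv_mul_cancel hV0 hVt, mul_one, ENNReal.div_eq_inv_mul,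
          mul_one]

lemma annulus (q y : E2) {ε : ℝ} (hε : 0 < ε) (t : ℝ) :
    unifBall y ε (closedBall q t \ closedBall q (t - ε / 100)) ≤ 1 / 4 := by
  have hδ : (0:ℝ) < ε / 100 := by linarith
  set δ : ℝ := ε / 100 with hδ_def
  set s := dist q y with hs_def
  apply quarter_of y hε
  by_cases hcase : s ≤ 10 * ε
  · by_cases hempty : s + ε ≤ t - δ
    · have hE : (closedBall q t \ closedBall q (t - δ)) ∩ closedBall y ε = ∅ := by
        ext w
        simp only [Set.mem_inter_iff, Set.mem_diff, mem_closedBall,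
          Set.mem_empty_iff_false, iff_false, not_and, and_imp]
        intro _ h2 h3
        exact h2 (by
          calc dist w q ≤ dist w y + dist y q := dist_triangle _ _ _
            _ ≤ ε + s := by rw [dist_comm y q]; exact add_le_add h3 le_rfl
            _ ≤ t - δ := by linarith)
      rw [hE]
      simp
    · push_neg at hempty
      by_cases ht : t ≤ δ
      · by_cases ht0 : 0 ≤ t
        · calc 4 * volume ((closedBall q t \ closedBall q (t - δ)) ∩ closedBall y ε)
              ≤ 4 * volume (closedBall q t) := by
                gcongr
                exact Set.inter_subset_left.trans Set.diff_subset
            _ = 4 * (ENNReal.ofReal (t ^ 2) * W) := by rw [volCB q ht0]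
            _ = ENNReal.ofReal (4 * t ^ 2) * W := by
                rw [ENNReal.ofReal_mul (by norm_num : (0:ℝ) ≤ 4), ← mul_assoc]
                norm_num
            _ ≤ ENNReal.ofReal (ε ^ 2) * W := by
                gcongr
                nlinarith
            _ = volume (closedBall y ε) := (volCB y hε.le).symm
        · push_neg at ht0
          have : closedBall q t = (∅ : Set E2) := closedBall_eq_empty.2 ht0
          calc 4 * volume ((closedBall q t \ closedBall q (t - δ)) ∩ closedBall y ε)
              ≤ 4 * volume (closedBall q t) := by
                gcongr
                exact Set.inter_subset_left.trans Set.diff_subset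
            _ = 0 := by rw [this]; simp
            _ ≤ volume (closedBall y ε) := zero_le
      · push_neg at ht
        have h1 : (0:ℝ) ≤ t - δ := by linarith
        have hdiff : volume (closedBall q t \ closedBall q (t - δ))
            = ENNReal.ofReal (t ^ 2 - (t - δ) ^ 2) * W := by
          rw [measure_diff (closedBall_subset_closedBall (by linarith))
            measurableSet_closedBall.nullMeasurableSet (CB_ne_top q _),
            volCB q (by linarith : (0:ℝ) ≤ t), volCB q h1,
            ← ENNReal.sub_mul (fun _ _ => W_ne_top),
            ENNReal.ofReal_sub _ (by positivity)]
        calc 4 * volume ((closedBall q t \ closedBall q (t - δ)) ∩ closedBall y ε)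
            ≤ 4 * volume (closedBall q t \ closedBall q (t - δ)) := by
              gcongr
              exact Set.inter_subset_left
          _ = ENNReal.ofReal (4 * (t ^ 2 - (t - δ) ^ 2)) * W := by
              rw [hdiff, ENNReal.ofReal_mul (by norm_num : (0:ℝ) ≤ 4), ← mul_assoc]
              norm_num
          _ ≤ ENNReal.ofReal (ε ^ 2) * W := by
              gcongr
              nlinarith
          _ = volume (closedBall y ε) := (volCB y hε.le).symm
  · push_neg at hcase
    have hs0 : 0 < s := by linarith
    set e : E2 := s⁻¹ • (q - y) with he_def
    have hqy : ‖q - y‖ = s := by rw [← dist_eq_norm]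
    have hne : ‖e‖ = 1 := by
      rw [he_def, norm_smul, hqy, norm_inv, Real.norm_eq_abs, abs_of_pos hs0]
      field_simp
    have hse : s • e = q - y := by
      rw [he_def, smul_smul, mul_inv_cancel₀ hs0.ne', one_smul]
    have hinner_qy : ⟪q - y, e⟫ = s := by
      rw [he_def, real_inner_smul_right, real_inner_self_eq_norm_sq, hqy]
      field_simp
    have hsub : (closedBall q t \ closedBall q (t - δ)) ∩ closedBall y ε
        ⊆ {w : E2 | ⟪w - y, e⟫ ∈ Set.Icc (s - t) ((s - t) + (δ + ε / 18))
            ∧ dist w y ≤ ε} := by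
      rintro w ⟨⟨hw1, hw2⟩, hw3⟩
      rw [mem_closedBall] at hw1 hw3
      have hw2' : t - δ < dist w q := by
        by_contra hcon
        exact hw2 (mem_closedBall.mpr (not_lt.mp hcon))
      set c := ⟪w - y, e⟫ with hc_def
      set d := dist w q with hd_def
      have hwy : ‖w - y‖ ≤ ε := by rwa [dist_eq_norm] at hw3
      have hlow : s - c ≤ d := by
        have hqw : q - w = (q - y) - (w - y) := by abel
        have : ⟪q - w, e⟫ = s - c := by rw [hqw, inner_sub_left, hinner_qy]
        calc s - c = ⟪q - w, e⟫ := this.symm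
          _ ≤ ‖q - w‖ * ‖e‖ := real_inner_le_norm _ _
          _ = d := by rw [hne, mul_one, ← dist_eq_norm, dist_comm]
      have hc_le : c ≤ ε := by
        calc c ≤ ‖w - y‖ * ‖e‖ := real_inner_le_norm _ _
          _ ≤ ε := by rw [hne, mul_one]; exact hwy
      have hup : d ≤ (s - c) + ε / 18 := by
        have hwq : w - q = (w - y) - s • e := by rw [hse]; abel
        have hd2 : d ^ 2 = ‖w - y‖ ^ 2 - 2 * (s * c) + s ^ 2 := by
          rw [hd_def, dist_eq_norm, hwq, norm_sub_sq_real, real_inner_smul_right,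
            norm_smul, Real.norm_eq_abs, abs_of_pos hs0, hne, mul_one]
        have hA : 9 * ε ≤ s - c := by linarith
        have h6 : d ^ 2 ≤ (s - c) ^ 2 + ε ^ 2 := by
          nlinarith [norm_nonneg (w - y), sq_nonneg c]
        nlinarith [dist_nonneg (x := w) (y := q), hA, hε]
      constructor
      · constructor
        · linarith
        · linarith
      · exact hw3
    calc 4 * volume ((closedBall q t \ closedBall q (t - δ)) ∩ closedBall y ε)
        ≤ 4 * volume {w : E2 | ⟪w - y, e⟫ ∈ Set.Icc (s - t) ((s - t) + (δ + ε / 18))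
            ∧ dist w y ≤ ε} := mul_le_mul_right (measure_mono hsub) _
      _ ≤ 4 * (ENNReal.ofReal (δ + ε / 18) * ENNReal.ofReal (2 * ε)) := by
          gcongr
          exact vol_slab y e hne ε (s - t) (δ + ε / 18)
      _ = ENNReal.ofReal (ε ^ 2 * (236 / 450)) := by
          rw [← ENNReal.ofReal_mul (by positivity), ← ENNReal.ofReal_ofNat,
            ← ENNReal.ofReal_mul (by norm_num)]
          congr 1
          rw [hδ_def]; ring
      _ ≤ ENNReal.ofReal (ε ^ 2) * W := by
          calc ENNReal.ofReal (ε ^ 2 * (236 / 450))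
              ≤ ENNReal.ofReal (ε ^ 2 * (49 / 25)) := by
                apply ENNReal.ofReal_le_ofReal
                nlinarith
            _ = ENNReal.ofReal (ε ^ 2) * ENNReal.ofReal (49 / 25) :=
                ENNReal.ofReal_mul (by positivity)
            _ ≤ ENNReal.ofReal (ε ^ 2) * W := mul_le_mul_right W_ge _
      _ = volume (closedBall y ε) := (volCB y hε.le).symm

end Stmt11Aux

open Stmt11Aux in
/-- anti-concentration for near-ties: if dist(q,x) and dist(q,y) agree
to within ε/100 and x, y are at distance at least ε, then after independent uniform
ε-perturbations of x and y, the perturbed x is strictly closer to q with probability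
at least 1/4. -/
theorem stmt11 (p q x y : EuclideanSpace ℝ (Fin 2)) (ε : ℝ) (hε : 0 < ε)
    (hpq : 2 * ε ≤ dist p q)
    (htie : |dist q x - dist q y| ≤ ε / 100)
    (hxy : ε ≤ dist x y) :
    (1 : ENNReal) / 4 ≤
      ((unifBall x ε).prod (unifBall y ε))
        {w : EuclideanSpace ℝ (Fin 2) × EuclideanSpace ℝ (Fin 2) |
          dist q w.1 < dist q w.2} := by
  set μ := unifBall x ε with hμ_def
  set ν := unifBall y ε with hν_def
  haveI hPμ : IsProbabilityMeasure μ := ⟨unifBall_univ x hε⟩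
  haveI hPν : IsProbabilityMeasure ν := ⟨unifBall_univ y hε⟩
  set S : Set (EuclideanSpace ℝ (Fin 2) × EuclideanSpace ℝ (Fin 2)) :=
    {w | dist q w.1 < dist q w.2} with hS_def
  have hS : MeasurableSet S :=
    (isOpen_lt (continuous_const.dist continuous_fst)
      (continuous_const.dist continuous_snd)).measurableSet
  have hr : 0 < dist q x := by
    have h1 : dist x y ≤ dist x q + dist q y := dist_triangle _ _ _
    rw [dist_comm x q] at h1
    have h2 := abs_le.mp htie
    linarith
  -- pointwise CDF comparison
  have step : ∀ t : ℝ, ν (closedBall q t) ≤ μ (closedBall q t) + 1 / 4 := by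
    intro t
    have hset : closedBall q t ⊆ closedBall q (t - ε / 100)
        ∪ (closedBall q t \ closedBall q (t - ε / 100)) := by
      intro w hw
      by_cases h : w ∈ closedBall q (t - ε / 100)
      · exact Or.inl h
      · exact Or.inr ⟨hw, h⟩
    have h1 : ν (closedBall q t) ≤ ν (closedBall q (t - ε / 100))
        + ν (closedBall q t \ closedBall q (t - ε / 100)) :=
      (measure_mono hset).trans (measure_union_le _ _)
    have h2 := shift q x y hε hr htie t
    have h3 := annulus q y hε t
    calc ν (closedBall q t) ≤ ν (closedBall q (t - ε / 100))
        + ν (closedBall q t \ closedBall q (t - ε / 100)) := h1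
      _ ≤ μ (closedBall q t) + 1 / 4 := add_le_add h2 h3
  -- ball vs closed ball under μ
  have hball : ∀ t : ℝ, μ (ball q t) = μ (closedBall q t) := by
    intro t
    have hsph : μ (sphere q t) = 0 := by
      rw [hμ_def, unifBall_apply]
      have : volume ((sphere q t) ∩ closedBall x ε) = 0 := by
        apply le_antisymm _ zero_le
        calc volume ((sphere q t) ∩ closedBall x ε) ≤ volume (sphere q t) :=
            measure_mono Set.inter_subset_left
          _ = 0 := Measure.addHaar_sphere volume q t
      rw [this, mul_zero]
    apply le_antisymm (measure_mono ball_subset_closedBall)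
    calc μ (closedBall q t) = μ (ball q t ∪ sphere q t) := by rw [ball_union_sphere]
      _ ≤ μ (ball q t) + μ (sphere q t) := measure_union_le _ _
      _ = μ (ball q t) := by rw [hsph, add_zero]
  -- product formula
  have hP : (μ.prod ν) S = ∫⁻ w2, μ (ball q (dist q w2)) ∂ν := by
    rw [Measure.prod_apply_symm hS]
    apply lintegral_congr
    intro w2
    congr 1
    ext w1
    simp [hS_def, mem_ball, dist_comm]
  -- the half lower bound
  have hhalf : (1 : ℝ≥0∞) / 2 ≤ ∫⁻ w, ν (closedBall q (dist q w)) ∂ν := by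
    set U : Set (EuclideanSpace ℝ (Fin 2) × EuclideanSpace ℝ (Fin 2)) :=
      {w | dist q w.2 ≤ dist q w.1} with hU_def
    have hU : MeasurableSet U :=
      (isClosed_le (continuous_const.dist continuous_snd)
        (continuous_const.dist continuous_fst)).measurableSet
    have hU1 : (ν.prod ν) U = ∫⁻ w, ν (closedBall q (dist q w)) ∂ν := by
      rw [Measure.prod_apply hU]
      apply lintegral_congr
      intro w
      congr 1
      ext w2
      simp [hU_def, mem_closedBall, dist_comm]
    have hswap : (ν.prod ν) (Prod.swap ⁻¹' U) = (ν.prod ν) U := by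
      rw [← Measure.map_apply measurable_swap hU, Measure.prod_swap]
    have hcover : (Set.univ : Set (EuclideanSpace ℝ (Fin 2) × EuclideanSpace ℝ (Fin 2)))
        ⊆ U ∪ Prod.swap ⁻¹' U := by
      intro w _
      rcases le_total (dist q w.2) (dist q w.1) with h | h
      · exact Or.inl h
      · exact Or.inr h
    have h1 : (1 : ℝ≥0∞) ≤ (ν.prod ν) U * 2 := by
      calc (1 : ℝ≥0∞) = (ν.prod ν) Set.univ := measure_univ.symm
        _ ≤ (ν.prod ν) (U ∪ Prod.swap ⁻¹' U) := measure_mono hcover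
        _ ≤ (ν.prod ν) U + (ν.prod ν) (Prod.swap ⁻¹' U) := measure_union_le _ _
        _ = (ν.prod ν) U * 2 := by rw [hswap, mul_two]
    rw [← hU1]
    rw [ENNReal.div_le_iff_le_mul (Or.inl (by norm_num)) (Or.inl (by norm_num))]
    exact h1
  -- combine
  have hchain : ∫⁻ w, ν (closedBall q (dist q w)) ∂ν ≤ (μ.prod ν) S + 1 / 4 := by
    calc ∫⁻ w, ν (closedBall q (dist q w)) ∂ν
        ≤ ∫⁻ w, (μ (ball q (dist q w)) + 1 / 4) ∂ν := by
          apply lintegral_mono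
          intro w
          show ν (closedBall q (dist q w)) ≤ μ (ball q (dist q w)) + 1 / 4
          rw [hball]
          exact step (dist q w)
      _ = (∫⁻ w, μ (ball q (dist q w)) ∂ν) + 1 / 4 := by
          rw [lintegral_add_right _ measurable_const, lintegral_const, measure_univ,
            mul_one]
      _ = (μ.prod ν) S + 1 / 4 := by rw [hP]
  have hfin : (1 : ℝ≥0∞) / 2 ≤ (μ.prod ν) S + 1 / 4 := hhalf.trans hchain
  have h14 : (1 : ℝ≥0∞) / 2 = 1 / 4 + 1 / 4 := by
    have a4 : (ENNReal.ofReal (1/4) : ℝ≥0∞) = 1 / 4 := by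
      rw [ENNReal.ofReal_div_of_pos (by norm_num)]; norm_num
    have a2 : (ENNReal.ofReal (1/2) : ℝ≥0∞) = 1 / 2 := by
      rw [ENNReal.ofReal_div_of_pos (by norm_num)]; norm_num
    rw [← a4, ← a2, ← ENNReal.ofReal_add (by norm_num) (by norm_num)]
    norm_num
  rw [h14] at hfin
  exact (ENNReal.add_le_add_iff_right (by norm_num)).mp hfin
end

section
/- Run Kruskal's greedy matching-into-path procedure on a finite metric space X = A ∪ B where every pairwise distance within A is less than 1, and every distance between A and B is greater than R > 2·|A|. Then every edge selected by the greedy TSP heuristic (repeatedly adding the globally shortest edge not creating a cycle or a degree-3 vertex) with both endpoints determined before any A–B edge is selected covers all of A by a collection of paths; in particular, the set of greedy-selected edges within A depends only on the metric restricted to A (and the tie-breaking order), not on the positions of points in B. -/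
/-- Degree of a vertex in a list of edges. -/
def degIn {α : Type*} [DecidableEq α] (T : List (α × α)) (v : α) : ℕ :=
  (T.filter (fun e => e.1 = v ∨ e.2 = v)).length

/-- Connectivity of two vertices via the edges of `T`. -/
def conn {α : Type*} (T : List (α × α)) (u v : α) : Prop :=
  Relation.ReflTransGen (fun x y => (x, y) ∈ T ∨ (y, x) ∈ T) u v

/-- An edge is valid at state `T` for the greedy TSP heuristic: it is a non-loop,
creates no vertex of degree 3 and closes no cycle. -/
def validEdge {α : Type*} [DecidableEq α] (T : List (α × α)) (e : α × α) : Prop :=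
  e.1 ≠ e.2 ∧ degIn T e.1 ≤ 1 ∧ degIn T e.2 ≤ 1 ∧ ¬ conn T e.1 e.2

/-- `L` is a complete run of the greedy TSP heuristic for the distance function `d`
with tie-breaking order `tb`: each selected edge is valid and of minimum length
(ties broken by `tb`) among the valid edges at that moment, and no valid edge
remains at the end. -/
def IsGreedyRun {α : Type*} [DecidableEq α] (d : α → α → ℝ) (tb : α × α → ℕ)
    (L : List (α × α)) : Prop :=
  (∀ i : Fin L.length,
      validEdge (L.take i.val) (L.get i) ∧
      ∀ e : α × α, validEdge (L.take i.val) e →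
        d (L.get i).1 (L.get i).2 < d e.1 e.2 ∨
        (d (L.get i).1 (L.get i).2 = d e.1 e.2 ∧ tb (L.get i) ≤ tb e)) ∧
  ∀ e : α × α, ¬ validEdge L e

set_option linter.unusedSectionVars false
set_option linter.unusedVariables false
set_option linter.unnecessarySimpa false

section Aux
variable {α : Type*} [inst : DecidableEq α]

/-- predicate: edge inside A -/
def pA (A : Finset α) (e : α × α) : Bool := decide (e.1 ∈ A ∧ e.2 ∈ A)

/-- all edges are A–A or B–B -/
def good (A B : Finset α) (T : List (α × α)) : Prop :=
  ∀ e ∈ T, (e.1 ∈ A ∧ e.2 ∈ A) ∨ (e.1 ∈ B ∧ e.2 ∈ B)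

lemma conn_mono {T T' : List (α × α)} (h : ∀ e ∈ T, e ∈ T') {u v : α}
    (hc : conn T u v) : conn T' u v :=
  Relation.ReflTransGen.mono (fun x y (hxy : (x, y) ∈ T ∨ (y, x) ∈ T) => hxy.imp (h _) (h _)) u v hc

lemma conn_symm {T : List (α × α)} {u v : α} (h : conn T u v) : conn T v u :=
  by
    induction h with
    | refl => exact Relation.ReflTransGen.refl
    | tail _ hs ih => exact Relation.ReflTransGen.head hs.symm ih

lemma conn_trans {T : List (α × α)} {u v w : α} (h : conn T u v) (h' : conn T v w) :
    conn T u w := Relation.ReflTransGen.trans h h'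

lemma degIn_append (T S : List (α × α)) (v : α) :
    degIn (T ++ S) v = degIn T v + degIn S v := by
  simp [degIn, List.filter_append]

lemma degIn_le_of_sublist {T T' : List (α × α)} (h : T.Sublist T') (v : α) :
    degIn T v ≤ degIn T' v := List.Sublist.length_le (h.filter _)

lemma degIn_eq_zero_iff {T : List (α × α)} {v : α} :
    degIn T v = 0 ↔ ∀ e ∈ T, ¬(e.1 = v ∨ e.2 = v) := by
  simp [degIn, List.length_eq_zero_iff, List.filter_eq_nil_iff]

lemma validEdge_of_sublist {T T' : List (α × α)} (h : T.Sublist T') {e : α × α}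
    (hv : validEdge T' e) : validEdge T e :=
  ⟨hv.1, le_trans (degIn_le_of_sublist h _) hv.2.1,
   le_trans (degIn_le_of_sublist h _) hv.2.2.1,
   fun hc => hv.2.2.2 (conn_mono (fun _ he => h.subset he) hc)⟩

lemma conn_stop_of_deg_zero {T : List (α × α)} {v z : α} (hd : degIn T v = 0)
    (hc : conn T v z) : z = v := by
  rcases Relation.ReflTransGen.cases_head hc with rfl | ⟨c, hstep, _⟩
  · rfl
  · exfalso
    rw [degIn_eq_zero_iff] at hd
    rcases hstep with h1 | h2
    · exact hd _ h1 (Or.inl rfl)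
    · exact hd _ h2 (Or.inr rfl)

lemma mem_A_of_conn {A B : Finset α} (hdisj : Disjoint A B) {T : List (α × α)}
    (hg : good A B T) {u v : α} (hu : u ∈ A) (hc : conn T u v) : v ∈ A := by
  induction hc with
  | refl => exact hu
  | tail hbc hstep ih =>
    rename_i b c
    rcases hstep with h1 | h2
    · rcases hg _ h1 with ⟨_, h⟩ | ⟨hb, _⟩
      · exact h
      · exact absurd hb (Finset.disjoint_left.mp hdisj ih)
    · rcases hg _ h2 with ⟨h, _⟩ | ⟨_, hb⟩
      · exact h
      · exact absurd hb (Finset.disjoint_left.mp hdisj ih)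

lemma conn_filter_of_conn {A B : Finset α} (hdisj : Disjoint A B) {T : List (α × α)}
    (hg : good A B T) {u v : α} (hu : u ∈ A) (hc : conn T u v) :
    conn (T.filter (pA A)) u v := by
  induction hc with
  | refl => exact Relation.ReflTransGen.refl
  | tail hbc hstep ih =>
    rename_i b c
    have hb : b ∈ A := mem_A_of_conn hdisj hg hu hbc
    refine Relation.ReflTransGen.tail ih ?_
    rcases hstep with h1 | h2
    · have hcA : c ∈ A := by
        rcases hg _ h1 with ⟨_, h⟩ | ⟨hbB, _⟩
        · exact h
        · exact absurd hbB (Finset.disjoint_left.mp hdisj hb)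
      exact Or.inl (List.mem_filter.mpr ⟨h1, by simp [pA, hb, hcA]⟩)
    · have hcA : c ∈ A := by
        rcases hg _ h2 with ⟨h, _⟩ | ⟨_, hbB⟩
        · exact h
        · exact absurd hbB (Finset.disjoint_left.mp hdisj hb)
      exact Or.inr (List.mem_filter.mpr ⟨h2, by simp [pA, hb, hcA]⟩)

lemma degIn_filter_eq {A B : Finset α} (hdisj : Disjoint A B) {T : List (α × α)}
    (hg : good A B T) {v : α} (hv : v ∈ A) :
    degIn (T.filter (pA A)) v = degIn T v := by
  unfold degIn
  rw [List.filter_filter]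
  congr 1
  refine List.filter_congr ?_
  intro e he
  by_cases hq : e.1 = v ∨ e.2 = v
  · have heA : e.1 ∈ A ∧ e.2 ∈ A := by
      rcases hg _ he with h | ⟨h1, h2⟩
      · exact h
      · exfalso
        rcases hq with rfl | rfl
        · exact Finset.disjoint_left.mp hdisj hv h1
        · exact Finset.disjoint_left.mp hdisj hv h2
    simp [pA, hq, heA.1, heA.2]
  · simp [hq]

lemma validEdge_filter_iff {A B : Finset α} (hdisj : Disjoint A B) {T : List (α × α)}
    (hg : good A B T) {e : α × α} (h1 : e.1 ∈ A) (h2 : e.2 ∈ A) :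
    validEdge (T.filter (pA A)) e ↔ validEdge T e := by
  unfold validEdge
  rw [degIn_filter_eq hdisj hg h1, degIn_filter_eq hdisj hg h2]
  refine and_congr_right fun _ => and_congr_right fun _ => and_congr_right fun _ => ?_
  constructor
  · exact fun hn hc => hn (conn_filter_of_conn hdisj hg h1 hc)
  · exact fun hn hc => hn (conn_mono (fun _ hx => (List.mem_filter.mp hx).1) hc)


/-- Invariant: every vertex is connected to a vertex of degree ≤ 1, distinct from
itself if it has positive degree. -/
def PathInv (T : List (α × α)) : Prop :=
  ∀ v : α, ∃ w, conn T v w ∧ degIn T w ≤ 1 ∧ (1 ≤ degIn T v → w ≠ v)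

lemma degIn_single (e : α × α) (v : α) :
    degIn [e] v = if e.1 = v ∨ e.2 = v then 1 else 0 := by
  by_cases h : e.1 = v ∨ e.2 = v <;> simp [degIn, h]

lemma inv_nil : PathInv ([] : List (α × α)) :=
  fun v => ⟨v, Relation.ReflTransGen.refl, by simp [degIn], by simp [degIn]⟩

lemma inv_step {T : List (α × α)} {e : α × α} (hI : PathInv T) (hv : validEdge T e) :
    PathInv (T ++ [e]) := by
  obtain ⟨hne, hdx, hdy, hnc⟩ := hv
  set x := e.1 with hx
  set y := e.2 with hy
  have hmem : e ∈ T ++ [e] := by simp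
  have hsub : ∀ f ∈ T, f ∈ T ++ [e] := fun f hf => by simp [hf]
  have hconxy : conn (T ++ [e]) x y :=
    Relation.ReflTransGen.single (Or.inl (by rwa [hx, hy, Prod.mk.eta]))
  have hdeg_other : ∀ w : α, w ≠ x → w ≠ y → degIn (T ++ [e]) w = degIn T w := by
    intro w hwx hwy
    rw [degIn_append, degIn_single]
    have h1 : ¬ (e.1 = w) := fun h => hwx (h ▸ hx.symm ▸ rfl)
    have h2 : ¬ (e.2 = w) := fun h => hwy (h ▸ hy.symm ▸ rfl)
    simp [h1, h2]
  intro v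
  by_cases hc : conn (T ++ [e]) v x
  · -- v is in the merged component
    obtain ⟨wx, hwx_conn, hwx_deg, hwx_imp⟩ := hI x
    obtain ⟨wy, hwy_conn, hwy_deg, hwy_imp⟩ := hI y
    -- endpoints of the two old paths
    set ex := if degIn T x = 0 then x else wx with hex
    set ey := if degIn T y = 0 then y else wy with hey
    have hconn_xex : conn T x ex := by
      rw [hex]; split
      · exact Relation.ReflTransGen.refl
      · exact hwx_conn
    have hconn_yey : conn T y ey := by
      rw [hey]; split
      · exact Relation.ReflTransGen.refl
      · exact hwy_conn
    have hexney : ex ≠ ey := by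
      intro hcontra
      exact hnc (conn_trans hconn_xex (hcontra ▸ conn_symm hconn_yey))
    have hdegex : degIn (T ++ [e]) ex ≤ 1 := by
      rw [hex]; split
      · rename_i h0
        rw [degIn_append, h0, degIn_single]
        split <;> omega
      · rename_i h0
        have hx1 : 1 ≤ degIn T x := Nat.one_le_iff_ne_zero.mpr h0
        have hwxx : wx ≠ x := hwx_imp hx1
        have hwxy : wx ≠ y := by
          intro hh; exact hnc (hh ▸ hwx_conn)
        rw [hdeg_other wx hwxx hwxy]; exact hwx_deg
    have hdegey : degIn (T ++ [e]) ey ≤ 1 := by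
      rw [hey]; split
      · rename_i h0
        rw [degIn_append, h0, degIn_single]
        split <;> omega
      · rename_i h0
        have hy1 : 1 ≤ degIn T y := Nat.one_le_iff_ne_zero.mpr h0
        have hwyy : wy ≠ y := hwy_imp hy1
        have hwyx : wy ≠ x := by
          intro hh; exact hnc (conn_symm (hh ▸ hwy_conn))
        rw [hdeg_other wy hwyx hwyy]; exact hwy_deg
    have hconn_vex : conn (T ++ [e]) v ex :=
      conn_trans hc (conn_mono hsub hconn_xex)
    have hconn_vey : conn (T ++ [e]) v ey :=
      conn_trans hc (conn_trans hconxy (conn_mono hsub hconn_yey))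
    by_cases hvex : v = ex
    · exact ⟨ey, hconn_vey, hdegey, fun _ => fun hh => hexney (hvex ▸ hh ▸ rfl)⟩
    · exact ⟨ex, hconn_vex, hdegex, fun _ => fun hh => hvex hh.symm⟩
  · -- v's component is untouched
    obtain ⟨w, hw_conn, hw_deg, hw_imp⟩ := hI v
    have hwx : w ≠ x := by
      intro hh
      exact hc (conn_mono hsub (hh ▸ hw_conn))
    have hwy : w ≠ y := by
      intro hh
      exact hc (conn_trans (conn_mono hsub (hh ▸ hw_conn)) (conn_symm hconxy))
    have hvx : v ≠ x := fun hh => hc (hh ▸ Relation.ReflTransGen.refl)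
    have hvy : v ≠ y := fun hh =>
      hc (conn_trans (hh ▸ Relation.ReflTransGen.refl) (conn_symm hconxy))
    refine ⟨w, conn_mono hsub hw_conn, ?_, ?_⟩
    · rw [hdeg_other w hwx hwy]; exact hw_deg
    · rw [hdeg_other v hvx hvy]; exact hw_imp


/-- A greedy run restricted to edges inside `A`, starting from state `P`. -/
def AGreedy (A : Finset α) (d : α → α → ℝ) (tb : α × α → ℕ) :
    List (α × α) → List (α × α) → Prop
  | P, [] => ∀ e : α × α, ¬ (e.1 ∈ A ∧ e.2 ∈ A ∧ validEdge P e)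
  | P, x :: M =>
      (x.1 ∈ A ∧ x.2 ∈ A ∧ validEdge P x) ∧
      (∀ e : α × α, e.1 ∈ A → e.2 ∈ A → validEdge P e →
        d x.1 x.2 < d e.1 e.2 ∨ (d x.1 x.2 = d e.1 e.2 ∧ tb x ≤ tb e)) ∧
      AGreedy A d tb (P ++ [x]) M

lemma AGreedy_unique {A : Finset α} {d d' : α → α → ℝ} {tb : α × α → ℕ}
    (htb : Function.Injective tb) (hagree : ∀ u ∈ A, ∀ v ∈ A, d u v = d' u v) :
    ∀ (M M' P : List (α × α)), AGreedy A d tb P M → AGreedy A d' tb P M' → M = M' := by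
  intro M
  induction M with
  | nil =>
    intro M' P h h'
    cases M' with
    | nil => rfl
    | cons x' M' =>
      exact absurd ⟨h'.1.1, h'.1.2.1, h'.1.2.2⟩ (h x')
  | cons x M ih =>
    intro M' P h h'
    cases M' with
    | nil => exact absurd ⟨h.1.1, h.1.2.1, h.1.2.2⟩ (h' x)
    | cons x' M' =>
      obtain ⟨⟨hx1, hx2, hxv⟩, hmin, hrest⟩ := h
      obtain ⟨⟨hx1', hx2', hxv'⟩, hmin', hrest'⟩ := h'
      have hd : d x.1 x.2 = d' x.1 x.2 := hagree _ hx1 _ hx2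
      have hd' : d x'.1 x'.2 = d' x'.1 x'.2 := hagree _ hx1' _ hx2'
      have h1 := hmin x' hx1' hx2' hxv'
      have h2 := hmin' x hx1 hx2 hxv
      have hxx : x = x' := by
        rcases h1 with hlt | ⟨heq, htb1⟩ <;> rcases h2 with hlt' | ⟨heq', htb2⟩
        · exfalso; rw [hd, hd'] at hlt; linarith
        · exfalso; rw [hd, hd'] at hlt; linarith
        · exfalso; rw [hd, hd'] at heq; linarith
        · exact htb (le_antisymm htb1 htb2)
      subst hxx
      rw [ih M' (P ++ [x]) hrest hrest']

lemma AGreedy_end {A : Finset α} {d : α → α → ℝ} {tb : α × α → ℕ} :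
    ∀ (M P : List (α × α)), AGreedy A d tb P M →
      ∀ e : α × α, ¬ (e.1 ∈ A ∧ e.2 ∈ A ∧ validEdge (P ++ M) e) := by
  intro M
  induction M with
  | nil => intro P h e; simpa using h e
  | cons x M ih =>
    intro P h e
    have := ih (P ++ [x]) h.2.2 e
    simpa using this

lemma AGreedy_inv {A : Finset α} {d : α → α → ℝ} {tb : α × α → ℕ} :
    ∀ (M P : List (α × α)), AGreedy A d tb P M → PathInv P → PathInv (P ++ M) := by
  intro M
  induction M with
  | nil => intro P _ hI; simpa using hI
  | cons x M ih =>
    intro P h hI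
    have h1 : PathInv (P ++ [x]) := inv_step hI h.1.2.2
    have := ih (P ++ [x]) h.2.2 h1
    simpa using this


/-- A–A edges are selected before crossing edges. -/
lemma claim2 {A B : Finset α} {d : α → α → ℝ} {R : ℝ} {tb : α × α → ℕ}
    {L : List (α × α)}
    (hsymm : ∀ u v, d u v = d v u)
    (hin : ∀ u ∈ A, ∀ v ∈ A, u ≠ v → d u v < 1)
    (hcross : ∀ u ∈ A, ∀ v ∈ B, R < d u v)
    (hR : 2 * (A.card : ℝ) < R)
    (hL : IsGreedyRun d tb L) :
    ∀ i j : Fin L.length, (L.get i).1 ∈ A → (L.get i).2 ∈ A →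
      (((L.get j).1 ∈ A ∧ (L.get j).2 ∈ B) ∨ ((L.get j).1 ∈ B ∧ (L.get j).2 ∈ A)) →
      (i : ℕ) < (j : ℕ) := by
  intro i j h1 h2 hcr
  by_contra hcon
  push_neg at hcon
  have hvi : validEdge (L.take i.val) (L.get i) := (hL.1 i).1
  have hsubl : (L.take j.val).Sublist (L.take i.val) := by
    have : (L.take i.val).take j.val = L.take j.val := by
      rw [List.take_take, min_eq_left hcon]
    rw [← this]
    exact List.take_sublist _ _
  have hvj : validEdge (L.take j.val) (L.get i) := validEdge_of_sublist hsubl hvi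
  have hmin := (hL.1 j).2 (L.get i) hvj
  have hne : (L.get i).1 ≠ (L.get i).2 := hvi.1
  have hcard : 1 < A.card := Finset.one_lt_card.mpr ⟨_, h1, _, h2, hne⟩
  have hcard' : (2 : ℝ) ≤ (A.card : ℝ) := by exact_mod_cast hcard
  have hdi : d (L.get i).1 (L.get i).2 < 1 := hin _ h1 _ h2 hne
  have hdj : R < d (L.get j).1 (L.get j).2 := by
    rcases hcr with ⟨ha, hb⟩ | ⟨hb, ha⟩
    · exact hcross _ ha _ hb
    · rw [hsymm]; exact hcross _ ha _ hb
  rcases hmin with hlt | ⟨heq, _⟩ <;> linarith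

/-- A prefix before all crossings is `good`. -/
lemma good_take {A B : Finset α} (hpart : ∀ v : α, v ∈ A ∨ v ∈ B)
    {L : List (α × α)} {i : ℕ}
    (h : ∀ k (hk : k < L.length), k < i →
      ¬ (((L.get ⟨k, hk⟩).1 ∈ A ∧ (L.get ⟨k, hk⟩).2 ∈ B) ∨
         ((L.get ⟨k, hk⟩).1 ∈ B ∧ (L.get ⟨k, hk⟩).2 ∈ A))) :
    good A B (L.take i) := by
  intro e he
  obtain ⟨k, hk, hke⟩ := List.getElem_of_mem he
  have hkl : k < L.length := lt_of_lt_of_le hk (by simpa using List.length_take_le i L)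
  have hki : k < i := lt_of_lt_of_le hk (by simpa using List.length_take_le' i L)
  have heq : e = L.get ⟨k, hkl⟩ := by
    rw [List.get_eq_getElem, ← List.getElem_take (h := hk), hke]
  have := h k hkl hki
  rw [← heq] at this
  rcases hpart e.1 with ha1 | hb1 <;> rcases hpart e.2 with ha2 | hb2
  · exact Or.inl ⟨ha1, ha2⟩
  · exact absurd (Or.inl ⟨ha1, hb2⟩) this
  · exact absurd (Or.inr ⟨hb1, ha2⟩) this
  · exact Or.inr ⟨hb1, hb2⟩


/-- No valid A–A edge remains relative to the filtered run. -/
lemma Aend {A B : Finset α} (hpart : ∀ v : α, v ∈ A ∨ v ∈ B) (hdisj : Disjoint A B)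
    {d : α → α → ℝ} {R : ℝ} {tb : α × α → ℕ} {L : List (α × α)}
    (hsymm : ∀ u v, d u v = d v u)
    (hin : ∀ u ∈ A, ∀ v ∈ A, u ≠ v → d u v < 1)
    (hcross : ∀ u ∈ A, ∀ v ∈ B, R < d u v)
    (hR : 2 * (A.card : ℝ) < R)
    (hL : IsGreedyRun d tb L) :
    ∀ e : α × α, ¬ (e.1 ∈ A ∧ e.2 ∈ A ∧ validEdge (L.filter (pA A)) e) := by
  classical
  have hc2 := claim2 hsymm hin hcross hR hL
  rintro e ⟨he1, he2, hev⟩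
  by_cases hex : ∃ k, ∃ hk : k < L.length,
      ((L.get ⟨k, hk⟩).1 ∈ A ∧ (L.get ⟨k, hk⟩).2 ∈ B) ∨
      ((L.get ⟨k, hk⟩).1 ∈ B ∧ (L.get ⟨k, hk⟩).2 ∈ A)
  · -- there is a crossing edge; take the first one
    set P : ℕ → Prop := fun k => ∃ hk : k < L.length,
      ((L.get ⟨k, hk⟩).1 ∈ A ∧ (L.get ⟨k, hk⟩).2 ∈ B) ∨
      ((L.get ⟨k, hk⟩).1 ∈ B ∧ (L.get ⟨k, hk⟩).2 ∈ A) with hP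
    have hj := Nat.find_spec hex
    set j := Nat.find hex with hjdef
    obtain ⟨hjl, hjcr⟩ := hj
    -- the prefix before j is good
    have hgood : good A B (L.take j) := by
      refine good_take hpart ?_
      intro k hk hkj hcr
      exact absurd (⟨hk, hcr⟩ : P k) (Nat.find_min hex hkj)
    -- all A–A edges occur before j
    have hfil : L.filter (pA A) = (L.take j).filter (pA A) := by
      conv_lhs => rw [← List.take_append_drop j L]
      rw [List.filter_append]
      have : (L.drop j).filter (pA A) = [] := by
        rw [List.filter_eq_nil_iff]
        intro f hf hpf
        obtain ⟨k, hk, hke⟩ := List.getElem_of_mem hf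
        have hkl : j + k < L.length := by
          have := hk; rw [List.length_drop] at this; omega
        have hfe : f = L.get ⟨j + k, hkl⟩ := by
          rw [List.get_eq_getElem, ← List.getElem_drop (h := hk), hke]
        simp only [pA, decide_eq_true_eq] at hpf
        have h' : j + k < j := hc2 ⟨j + k, hkl⟩ ⟨j, hjl⟩ (hfe ▸ hpf.1) (hfe ▸ hpf.2) hjcr
        omega
      rw [this, List.append_nil]
    rw [hfil] at hev
    have hev' : validEdge (L.take j) e := (validEdge_filter_iff hdisj hgood he1 he2).mp hev
    have hmin := (hL.1 ⟨j, hjl⟩).2 e hev'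
    have hne : e.1 ≠ e.2 := hev'.1
    have hcard : 1 < A.card := Finset.one_lt_card.mpr ⟨_, he1, _, he2, hne⟩
    have hcard' : (2 : ℝ) ≤ (A.card : ℝ) := by exact_mod_cast hcard
    have hde : d e.1 e.2 < 1 := hin _ he1 _ he2 hne
    have hdj : R < d (L.get ⟨j, hjl⟩).1 (L.get ⟨j, hjl⟩).2 := by
      rcases hjcr with ⟨ha, hb⟩ | ⟨hb, ha⟩
      · exact hcross _ ha _ hb
      · rw [hsymm]; exact hcross _ ha _ hb
    rcases hmin with hlt | ⟨heq, _⟩ <;> linarith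
  · -- no crossing edge at all: L is good
    push_neg at hex
    have hgood : good A B L := by
      intro f hf
      obtain ⟨k, hk, hke⟩ := List.getElem_of_mem hf
      have hfe : f = L.get ⟨k, hk⟩ := by rw [List.get_eq_getElem, hke]
      have hnc := hex k hk
      rw [← hfe] at hnc
      rcases hpart f.1 with ha1 | hb1 <;> rcases hpart f.2 with ha2 | hb2
      · exact Or.inl ⟨ha1, ha2⟩
      · exact absurd hb2 (hnc.1 ha1)
      · exact absurd ha2 (hnc.2 hb1)
      · exact Or.inr ⟨hb1, hb2⟩
    have hev' : validEdge L e := (validEdge_filter_iff hdisj hgood he1 he2).mp hev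
    exact hL.2 e hev'


/-- The A–A edges selected by a full greedy run form a restricted greedy run on `A`. -/
lemma extract {A B : Finset α} (hpart : ∀ v : α, v ∈ A ∨ v ∈ B) (hdisj : Disjoint A B)
    {d : α → α → ℝ} {R : ℝ} {tb : α × α → ℕ} {L : List (α × α)}
    (hsymm : ∀ u v, d u v = d v u)
    (hin : ∀ u ∈ A, ∀ v ∈ A, u ≠ v → d u v < 1)
    (hcross : ∀ u ∈ A, ∀ v ∈ B, R < d u v)
    (hR : 2 * (A.card : ℝ) < R)
    (hL : IsGreedyRun d tb L) :
    AGreedy A d tb [] (L.filter (pA A)) := by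
  have hc2 := claim2 hsymm hin hcross hR hL
  have hend := Aend hpart hdisj hsymm hin hcross hR hL
  suffices H : ∀ n i, L.length - i ≤ n →
      AGreedy A d tb ((L.take i).filter (pA A)) ((L.drop i).filter (pA A)) by
    have := H L.length 0 (by omega)
    simpa using this
  -- common case : i past the end
  have hbig : ∀ i, L.length ≤ i →
      AGreedy A d tb ((L.take i).filter (pA A)) ((L.drop i).filter (pA A)) := by
    intro i hi
    rw [List.drop_eq_nil_of_le hi, List.take_of_length_le hi]
    exact fun e he => hend e ⟨he.1, he.2.1, he.2.2⟩
  intro n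
  induction n with
  | zero =>
    intro i hi
    exact hbig i (by omega)
  | succ n ih =>
    intro i hi
    by_cases hlt : i < L.length
    · have hdropi : L.drop i = L[i] :: L.drop (i + 1) := List.drop_eq_getElem_cons hlt
      by_cases hpa : pA A (L[i]) = true
      · -- an A–A edge
        have hAi : (L[i] : α × α).1 ∈ A ∧ (L[i] : α × α).2 ∈ A := by
          simpa [pA] using hpa
        have hgood : good A B (L.take i) := by
          refine good_take hpart ?_
          intro k hk hki hcr
          have h' : (i : ℕ) < k := hc2 ⟨i, hlt⟩ ⟨k, hk⟩ hAi.1 hAi.2 hcr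
          omega
        rw [hdropi, List.filter_cons_of_pos hpa]
        refine ⟨⟨hAi.1, hAi.2, ?_⟩, ?_, ?_⟩
        · exact (validEdge_filter_iff hdisj hgood hAi.1 hAi.2).mpr (hL.1 ⟨i, hlt⟩).1
        · intro e he1 he2 hev
          exact (hL.1 ⟨i, hlt⟩).2 e ((validEdge_filter_iff hdisj hgood he1 he2).mp hev)
        · have hstep : (L.take (i + 1)).filter (pA A) =
              (L.take i).filter (pA A) ++ [L[i]] := by
            rw [List.take_succ, List.getElem?_eq_getElem hlt, Option.toList_some,
              List.filter_append, List.filter_cons_of_pos hpa, List.filter_nil]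
          have := ih (i + 1) (by omega)
          rwa [hstep] at this
      · -- not an A–A edge : state unchanged
        have hstep : (L.take (i + 1)).filter (pA A) = (L.take i).filter (pA A) := by
          rw [List.take_succ, List.getElem?_eq_getElem hlt, Option.toList_some,
            List.filter_append, List.filter_cons_of_neg hpa, List.filter_nil, List.append_nil]
        rw [hdropi, List.filter_cons_of_neg hpa]
        have := ih (i + 1) (by omega)
        rwa [hstep] at this
    · exact hbig i (by omega)

end Aux

/-- locality of the greedy TSP heuristic: if the cluster `A` has all
internal distances < 1 and is at distance > R > 2|A| from `B`, then greedy covers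
all of `A` by paths before selecting any `A`–`B` edge, and the set of greedy-selected
edges inside `A` depends only on the metric restricted to `A` (and the tie-breaking
order), not on the positions of the points of `B`. -/
theorem stmt19 {α : Type*} [Fintype α] [DecidableEq α]
    (A B : Finset α) (hpart : ∀ v : α, v ∈ A ∨ v ∈ B) (hdisj : Disjoint A B)
    (d d' : α → α → ℝ) (R : ℝ)
    (hsymm : ∀ u v, d u v = d v u) (hsymm' : ∀ u v, d' u v = d' v u)
    (hagree : ∀ u ∈ A, ∀ v ∈ A, d u v = d' u v)
    (hin : ∀ u ∈ A, ∀ v ∈ A, u ≠ v → d u v < 1)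
    (hcross : ∀ u ∈ A, ∀ v ∈ B, R < d u v ∧ R < d' u v)
    (hR : 2 * (A.card : ℝ) < R)
    (tb : α × α → ℕ) (htb : Function.Injective tb)
    (L L' : List (α × α))
    (hL : IsGreedyRun d tb L) (hL' : IsGreedyRun d' tb L') :
    (∀ e : α × α, (e ∈ L ∧ e.1 ∈ A ∧ e.2 ∈ A) ↔ (e ∈ L' ∧ e.1 ∈ A ∧ e.2 ∈ A)) ∧
    (∀ i j : Fin L.length,
        (L.get i).1 ∈ A → (L.get i).2 ∈ A →
        (((L.get j).1 ∈ A ∧ (L.get j).2 ∈ B) ∨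
          ((L.get j).1 ∈ B ∧ (L.get j).2 ∈ A)) →
        (i : ℕ) < (j : ℕ)) ∧
    (2 ≤ A.card → ∀ a ∈ A, ∃ e ∈ L, (e.1 ∈ A ∧ e.2 ∈ A) ∧ (e.1 = a ∨ e.2 = a)) := by
  classical
  have hcrossd : ∀ u ∈ A, ∀ v ∈ B, R < d u v := fun u hu v hv => (hcross u hu v hv).1
  have hcrossd' : ∀ u ∈ A, ∀ v ∈ B, R < d' u v := fun u hu v hv => (hcross u hu v hv).2
  have hin' : ∀ u ∈ A, ∀ v ∈ A, u ≠ v → d' u v < 1 := fun u hu v hv hne =>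
    (hagree u hu v hv) ▸ hin u hu v hv hne
  have hG := extract hpart hdisj hsymm hin hcrossd hR hL
  have hG' := extract hpart hdisj hsymm' hin' hcrossd' hR hL'
  have hfil : L.filter (pA A) = L'.filter (pA A) :=
    AGreedy_unique htb hagree _ _ [] hG hG'
  refine ⟨?_, claim2 hsymm hin hcrossd hR hL, ?_⟩
  · intro e
    have hmem : ∀ (M : List (α × α)), (e ∈ M ∧ e.1 ∈ A ∧ e.2 ∈ A) ↔ e ∈ M.filter (pA A) := by
      intro M
      rw [List.mem_filter]
      simp [pA]
    rw [hmem L, hmem L', hfil]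
  · intro hcard a ha
    by_contra hno
    push_neg at hno
    set TA := L.filter (pA A) with hTA
    have hinv : PathInv TA := by
      have := AGreedy_inv _ [] hG inv_nil
      simpa using this
    have hend := Aend hpart hdisj hsymm hin hcrossd hR hL
    have hga : degIn TA a = 0 := by
      rw [degIn_eq_zero_iff]
      intro e he hq
      have hm := List.mem_filter.mp he
      have hp : e.1 ∈ A ∧ e.2 ∈ A := by simpa [pA] using hm.2
      rcases hq with h | h
      · exact (hno e hm.1 hp).1 h
      · exact (hno e hm.1 hp).2 h
    obtain ⟨b, hb, hba⟩ := Finset.exists_mem_ne (by omega : 1 < A.card) a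
    obtain ⟨w, hconnw, hdw, _⟩ := hinv b
    have hgoodTA : good A B TA := fun e he =>
      Or.inl (by simpa [pA] using (List.mem_filter.mp he).2)
    have hwA : w ∈ A := mem_A_of_conn hdisj hgoodTA hb hconnw
    have hnaw : ¬ conn TA a w := by
      intro hc
      have hwa : w = a := conn_stop_of_deg_zero hga hc
      rw [hwa] at hconnw
      have : b = a := conn_stop_of_deg_zero hga (conn_symm hconnw)
      exact hba this
    have hane : a ≠ w := fun h => hnaw (h ▸ Relation.ReflTransGen.refl)
    exact hend (a, w) ⟨ha, hwA, hane, by rw [hga]; omega, hdw, hnaw⟩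
end
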